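/- Let G and G' be bounded-degree graphs (degrees at most d) and ι : V(G) → V(G') a bijective quasi-isometry with constant m. For any finite vertex set K in G with external boundary ∂K, the external boundary of the image satisfies |∂(ι(K))| ≤ d^m · |∂K|. -/

import Mathlib

/-- The external vertex boundary of `A`: vertices outside `A` adjacent to some vertex
of `A`. -/
def extBoundary {V : Type*} (G : SimpleGraph V) (A : Set V) : Set V :=
  {v | v ∉ A ∧ ∃ u ∈ A, G.Adj u v}

open SimpleGraph Finset

lemma extBoundary_finite {V : Type*} (G : SimpleGraph V) [∀ v, Fintype (G.neighborSet v)]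
    {K : Set V} (hK : K.Finite) : (extBoundary G K).Finite := by
  apply Set.Finite.subset (hK.biUnion (fun u _ => (G.neighborSet u).toFinite))
  rintro v ⟨hv, u, hu, h⟩
  exact Set.mem_biUnion hu h

lemma exitK {V : Type*} {G : SimpleGraph V} (hc : G.Connected) (K : Set V) :
    ∀ n (u v : V), G.dist u v ≤ n → u ∈ K → v ∉ K →
      ∃ w ∈ extBoundary G K, G.dist w v < G.dist u v := by
  intro n
  induction n with
  | zero =>
    intro u v hd hu hv
    have hne : u ≠ v := fun h => hv (h ▸ hu)
    exact absurd ((hc.dist_eq_zero_iff).mp (Nat.le_zero.mp hd)) hne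
  | succ n ih =>
    intro u v hd hu hv
    have hne : u ≠ v := fun h => hv (h ▸ hu)
    have hpos : 0 < G.dist u v := hc.pos_dist_of_ne hne
    obtain ⟨p, hp⟩ := hc.exists_walk_length_eq_dist u v
    cases p with
    | nil => exact absurd rfl hne
    | cons h q =>
      rename_i x
      have hq : q.length + 1 = G.dist u v := by simpa using hp
      have hxq : G.dist x v ≤ q.length := dist_le q
      have hxv : G.dist x v ≤ n := by omega
      by_cases hxK : x ∈ K
      · obtain ⟨w, hw, hlt⟩ := ih x v hxv hxK hv
        exact ⟨w, hw, by omega⟩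
      · exact ⟨x, ⟨hxK, u, hu, h⟩, by omega⟩

lemma sphere_bound {V : Type*} {G : SimpleGraph V} [∀ v, Fintype (G.neighborSet v)]
    (hc : G.Connected) {d : ℕ} (hdeg : ∀ v, G.degree v ≤ d) (w : V) :
    ∀ k, ∃ s : Finset V, (∀ v, G.dist w v = k → v ∈ s) ∧ s.card ≤ d ^ k := by
  classical
  intro k
  induction k with
  | zero =>
    refine ⟨{w}, fun v hv => ?_, by simp⟩
    have : w = v := (hc.dist_eq_zero_iff).mp hv
    simp [this]
  | succ k ih =>
    obtain ⟨s, hs, hcard⟩ := ih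
    refine ⟨s.biUnion (fun x => G.neighborFinset x), fun v hv => ?_, ?_⟩
    · have hr : G.Reachable w v := hc w v
      obtain ⟨p, hp⟩ := hr.exists_walk_length_eq_dist
      rw [hv] at hp
      cases hrev : p.reverse with
      | nil =>
        exfalso
        have : p.reverse.length = k + 1 := by rw [SimpleGraph.Walk.length_reverse, hp]
        rw [hrev] at this; simp at this
      | cons h q =>
        rename_i x
        have hql : q.length = k := by
          have : p.reverse.length = k + 1 := by rw [SimpleGraph.Walk.length_reverse, hp]
          rw [hrev] at this; simpa using this
        have h1 : G.dist w x ≤ k := by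
          rw [SimpleGraph.dist_comm]
          have := dist_le q
          omega
        have h2 : k ≤ G.dist w x := by
          have ht : G.dist w v ≤ G.dist w x + G.dist x v := hc.dist_triangle
          have hxv : G.dist x v ≤ 1 := by
            have := dist_le h.symm.toWalk
            simpa using this
          omega
        have hx : G.dist w x = k := le_antisymm h1 h2
        refine Finset.mem_biUnion.mpr ⟨x, hs x hx, ?_⟩
        rw [SimpleGraph.mem_neighborFinset]
        exact h.symm
    · calc (s.biUnion (fun x => G.neighborFinset x)).card
          ≤ ∑ x ∈ s, (G.neighborFinset x).card := Finset.card_biUnion_le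
        _ ≤ ∑ x ∈ s, d := Finset.sum_le_sum (fun x _ => hdeg x)
        _ = s.card * d := by simp [Finset.sum_const, mul_comm]
        _ ≤ d ^ k * d := Nat.mul_le_mul_right d hcard
        _ = d ^ (k + 1) := (pow_succ d k).symm

lemma mygeom_le {d : ℕ} (hd : 2 ≤ d) : ∀ n, ∑ k ∈ Finset.range n, d ^ k ≤ d ^ n := by
  intro n
  induction n with
  | zero => simp
  | succ n ih =>
    rw [Finset.sum_range_succ, pow_succ]
    have h2 : d ^ n * 2 ≤ d ^ n * d := Nat.mul_le_mul_left _ hd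
    omega

lemma ball_bound {V : Type*} {G : SimpleGraph V} [∀ v, Fintype (G.neighborSet v)]
    (hc : G.Connected) {d m : ℕ} (hdeg : ∀ v, G.degree v ≤ d) (hd : 2 ≤ d) (w : V) :
    ∃ t : Finset V, (∀ v, G.dist w v < m → v ∈ t) ∧ t.card ≤ d ^ m := by
  classical
  choose s hmem hcard using sphere_bound hc hdeg w
  refine ⟨(Finset.range m).biUnion s, fun v hv => ?_, ?_⟩
  · exact Finset.mem_biUnion.mpr ⟨G.dist w v, Finset.mem_range.mpr hv, hmem _ v rfl⟩
  · calc ((Finset.range m).biUnion s).card ≤ ∑ k ∈ Finset.range m, (s k).card :=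
        Finset.card_biUnion_le
      _ ≤ ∑ k ∈ Finset.range m, d ^ k := Finset.sum_le_sum (fun k _ => hcard k)
      _ ≤ d ^ m := mygeom_le hd m

lemma boundary_subsingleton {V : Type*} {G : SimpleGraph V} (hc : G.Connected)
    [∀ v, Fintype (G.neighborSet v)] (hdeg : ∀ v, G.degree v ≤ 1) (A : Set V) :
    (extBoundary G A).Subsingleton := by
  have huniq : ∀ {u v x : V}, G.Adj u v → G.Adj u x → x = v := by
    intro u v x h1 h2
    have hcard : (G.neighborFinset u).card ≤ 1 := hdeg u
    exact Finset.card_le_one.mp hcard x (by rwa [SimpleGraph.mem_neighborFinset]) v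
      (by rwa [SimpleGraph.mem_neighborFinset])
  have key : ∀ (x u : V) (p : G.Walk x u), ∀ z, G.Adj u z → x = u ∨ x = z := by
    intro x u p
    induction p with
    | nil => intro z _; exact Or.inl rfl
    | cons h' q ih =>
      intro z hz
      rcases ih z hz with h | h
      · subst h
        exact Or.inr (huniq hz h'.symm)
      · subst h
        exact Or.inl (huniq hz.symm h'.symm)
  rintro v₁ ⟨hv₁, u₁, hu₁, h₁⟩ v₂ ⟨hv₂, u₂, hu₂, h₂⟩
  obtain ⟨p⟩ := hc u₂ u₁
  rcases key u₂ u₁ p v₁ h₁ with h | h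
  · subst h
    exact (huniq h₁ h₂).symm ▸ rfl
  · exact absurd (h ▸ hu₂) hv₁

/-- if `ι` is a bijective quasi-isometry with constant `m` between bounded
degree graphs `G` and `G'`, then for a finite vertex set `K` of `G`,
`|∂(ι '' K)| ≤ d ^ m * |∂ K|`. -/
theorem stmt3 {V V' : Type*} (G : SimpleGraph V) (G' : SimpleGraph V')
    (hc : G.Connected) (hc' : G'.Connected)
    [∀ v, Fintype (G.neighborSet v)] [∀ v, Fintype (G'.neighborSet v)]
    (d m : ℕ) (hm : 1 ≤ m)
    (hdeg : ∀ v, G.degree v ≤ d) (hdeg' : ∀ v, G'.degree v ≤ d)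
    (ι : V → V') (hbij : Function.Bijective ι)
    (hqi : ∀ x y : V, G.dist x y ≤ m * G'.dist (ι x) (ι y) ∧
      G'.dist (ι x) (ι y) ≤ m * G.dist x y)
    (K : Set V) (hK : K.Finite) :
    (extBoundary G' (ι '' K)).Finite ∧
    (extBoundary G' (ι '' K)).ncard ≤ d ^ m * (extBoundary G K).ncard := by
  classical
  have hbfin : (extBoundary G K).Finite := extBoundary_finite G hK
  have main : ∀ v' ∈ extBoundary G' (ι '' K),
      ∃ w ∈ extBoundary G K, ∃ v : V, ι v = v' ∧ G.dist w v < m := by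
    rintro v' ⟨hnm, u', ⟨u, hu, rfl⟩, hadj⟩
    obtain ⟨v, rfl⟩ := hbij.2 v'
    have hvK : v ∉ K := fun h => hnm ⟨v, h, rfl⟩
    have hd1 : G'.dist (ι u) (ι v) ≤ 1 := by
      have := SimpleGraph.dist_le hadj.toWalk
      simpa using this
    have hduv : G.dist u v ≤ m := by
      have h1 := (hqi u v).1
      have h2 : m * G'.dist (ι u) (ι v) ≤ m * 1 := Nat.mul_le_mul_left m hd1
      omega
    obtain ⟨w, hw, hlt⟩ := exitK hc K m u v hduv hu hvK
    exact ⟨w, hw, v, rfl, lt_of_lt_of_le hlt hduv⟩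
  rcases Nat.lt_or_ge d 2 with hd | hd
  · interval_cases d
    · -- d = 0
      have hempty : extBoundary G' (ι '' K) = ∅ := by
        ext v'
        simp only [Set.mem_empty_iff_false, iff_false]
        rintro ⟨hnm, u', hu', hadj⟩
        have h0 : 0 < G'.degree u' := G'.degree_pos_iff_exists_adj u' |>.mpr ⟨v', hadj⟩
        have := hdeg' u'
        omega
      rw [hempty]
      simp
    · -- d = 1
      have hsub := boundary_subsingleton hc' hdeg' (ι '' K)
      have hfin : (extBoundary G' (ι '' K)).Finite := hsub.finite
      refine ⟨hfin, ?_⟩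
      rcases hsub.eq_empty_or_singleton with he | ⟨v', he⟩
      · simp [he]
      · have hv' : v' ∈ extBoundary G' (ι '' K) := he ▸ rfl
        obtain ⟨w, hw, -⟩ := main v' hv'
        have h1 : (extBoundary G' (ι '' K)).ncard = 1 := by rw [he, Set.ncard_singleton]
        have h2 : 0 < (extBoundary G K).ncard := (Set.ncard_pos hbfin).mpr ⟨w, hw⟩
        simpa [h1] using Nat.succ_le_of_lt h2
  · -- d ≥ 2
    choose t hmem hcard using ball_bound hc (m := m) hdeg hd
    set T : Finset V' := hbfin.toFinset.biUnion (fun w => (t w).image ι) with hT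
    have hsubT : extBoundary G' (ι '' K) ⊆ ↑T := by
      intro v' hv'
      obtain ⟨w, hw, v, rfl, hlt⟩ := main v' hv'
      exact Finset.mem_coe.mpr (Finset.mem_biUnion.mpr
        ⟨w, hbfin.mem_toFinset.mpr hw, Finset.mem_image.mpr ⟨v, hmem w v hlt, rfl⟩⟩)
    refine ⟨Set.Finite.subset T.finite_toSet hsubT, ?_⟩
    calc (extBoundary G' (ι '' K)).ncard
        ≤ (↑T : Set V').ncard := Set.ncard_le_ncard hsubT T.finite_toSet
      _ = T.card := Set.ncard_coe_finset T
      _ ≤ ∑ w ∈ hbfin.toFinset, ((t w).image ι).card := Finset.card_biUnion_le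
      _ ≤ ∑ w ∈ hbfin.toFinset, d ^ m :=
          Finset.sum_le_sum (fun w _ => le_trans Finset.card_image_le (hcard w))
      _ = hbfin.toFinset.card * d ^ m := by rw [Finset.sum_const, smul_eq_mul]
      _ = d ^ m * (extBoundary G K).ncard := by
          rw [Set.ncard_eq_toFinset_card _ hbfin, mul_comm]
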